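/- For real z with 0 ≤ z < 1: ∏_{k=1}^∞ (1 - z^k)^{φ(k)/k} = exp(z/(z-1)), where φ is the Euler totient function. Equivalently, ∑_{k=1}^∞ (φ(k)/k) · log(1 - z^k) = z/(z-1) = -z/(1-z). -/

import Mathlib

open Real

theorem stmt_7 (z : ℝ) (hz0 : 0 ≤ z) (hz1 : z < 1) :
    (∏' k : ℕ+, (1 - z ^ (k : ℕ)) ^ ((Nat.totient (k : ℕ) : ℝ) / (k : ℝ)) =
      Real.exp (z / (z - 1))) ∧
    (∑' k : ℕ+, (Nat.totient (k : ℕ) : ℝ) / (k : ℝ) * Real.log (1 - z ^ (k : ℕ)) =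
      z / (z - 1)) := by
  -- basic facts
  have hzlt : ∀ k : ℕ, k ≠ 0 → z ^ k < 1 := fun k hk => pow_lt_one₀ hz0 hz1 hk
  have hpos : ∀ k : ℕ, k ≠ 0 → 0 < 1 - z ^ k := fun k hk => by
    have := hzlt k hk; linarith
  -- the double-indexed family
  set a : ℕ × ℕ → ℝ := fun p =>
    ((Nat.totient p.1 : ℝ) / p.1) * (z ^ (p.1 * p.2) / p.2) with ha
  have ha_nonneg : ∀ p, 0 ≤ a p := by
    intro p
    apply mul_nonneg <;> apply div_nonneg <;> positivity
  -- inner sums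
  have hinner : ∀ k : ℕ,
      HasSum (fun n => a (k, n))
        ((Nat.totient k : ℝ) / k * (-Real.log (1 - z ^ k))) := by
    intro k
    rcases Nat.eq_zero_or_pos k with rfl | hk
    · simp only [ha, Nat.totient_zero, Nat.cast_zero, div_zero, zero_mul]
      exact hasSum_zero
    · have hk0 : k ≠ 0 := hk.ne'
      have habs : |z ^ k| < 1 := by
        rw [abs_of_nonneg (by positivity)]; exact hzlt k hk0
      have h1 := (Real.hasSum_pow_div_log_of_abs_lt_one habs).mul_left
        ((Nat.totient k : ℝ) / k)
      have h2 : (fun n : ℕ => (Nat.totient k : ℝ) / k * ((z ^ k) ^ (n + 1) / (n + 1)))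
          = fun n : ℕ => a (k, n + 1) := by
        funext n
        simp only [ha, ← pow_mul]
        norm_num
      rw [h2] at h1
      have := (hasSum_nat_add_iff (f := fun n => a (k, n)) 1).mp h1
      simpa [ha] using this
  -- summability of the double sum
  have hA : Summable a := by
    rw [summable_prod_of_nonneg ha_nonneg]
    constructor
    · exact fun k => (hinner k).summable
    · have key : ∀ k : ℕ, ∑' n, a (k, n) ≤ z ^ k / (1 - z) := by
        intro k
        rw [(hinner k).tsum_eq]
        rcases Nat.eq_zero_or_pos k with rfl | hk
        · simp only [Nat.totient_zero, Nat.cast_zero, div_zero, zero_mul]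
          have : (0:ℝ) < 1 - z := by linarith
          positivity
        · have hk0 : k ≠ 0 := hk.ne'
          have h1 : 0 < 1 - z ^ k := hpos k hk0
          have hlog : -Real.log (1 - z ^ k) ≤ z ^ k / (1 - z ^ k) := by
            have := Real.log_le_sub_one_of_pos (inv_pos.mpr h1)
            rw [Real.log_inv] at this
            have : -Real.log (1 - z ^ k) ≤ (1 - z ^ k)⁻¹ - 1 := this
            calc -Real.log (1 - z ^ k) ≤ (1 - z ^ k)⁻¹ - 1 := this
              _ = z ^ k / (1 - z ^ k) := by field_simp; ring
          have htot : (Nat.totient k : ℝ) / k ≤ 1 := by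
            rw [div_le_one (by exact_mod_cast hk)]
            exact_mod_cast Nat.totient_le k
          have hzz : z ^ k ≤ z := by
            have h := pow_le_pow_of_le_one hz0 hz1.le hk
            rwa [pow_one] at h
          have hfrac : z ^ k / (1 - z ^ k) ≤ z ^ k / (1 - z) :=
            div_le_div_of_nonneg_left (by positivity) (by linarith) (by linarith)
          calc (Nat.totient k : ℝ) / k * (-Real.log (1 - z ^ k))
              ≤ 1 * (z ^ k / (1 - z ^ k)) := by
                apply mul_le_mul htot hlog _ zero_le_one
                simp only [neg_nonneg]
                exact Real.log_nonpos (by linarith) (by linarith [pow_nonneg hz0 k])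
            _ = z ^ k / (1 - z ^ k) := one_mul _
            _ ≤ z ^ k / (1 - z) := hfrac
      apply Summable.of_nonneg_of_le (fun k => tsum_nonneg fun n => ha_nonneg _) key
      exact (summable_geometric_of_lt_one hz0 hz1).div_const _
  set S := ∑' p, a p with hS
  -- fiberwise over multiplication: S = z / (1 - z)
  have hfib := hA.hasSum.tsum_fiberwise (fun p : ℕ × ℕ => p.1 * p.2)
  have hg : (fun m => ∑' p : (fun p : ℕ × ℕ => p.1 * p.2) ⁻¹' {m}, a p.val)
      = fun m : ℕ => if m = 0 then 0 else z ^ m := by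
    funext m
    rcases eq_or_ne m 0 with rfl | hm
    · simp only [if_pos rfl]
      have : ∀ p : (fun p : ℕ × ℕ => p.1 * p.2) ⁻¹' {(0 : ℕ)}, a p.val = 0 := by
        rintro ⟨⟨k, n⟩, hp⟩
        simp only [Set.mem_preimage, Set.mem_singleton_iff] at hp
        rcases Nat.mul_eq_zero.mp hp with rfl | rfl
        · simp [ha]
        · simp [ha]
      rw [tsum_congr this, tsum_zero]
      simp
    · rw [if_neg hm]
      have hset : (fun p : ℕ × ℕ => p.1 * p.2) ⁻¹' {m} = ↑m.divisorsAntidiagonal := by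
        ext p; simp [Nat.mem_divisorsAntidiagonal, hm]
      rw [hset, Finset.tsum_subtype' m.divisorsAntidiagonal a]
      have hterm : ∀ p ∈ m.divisorsAntidiagonal,
          a p = (Nat.totient p.1 : ℝ) * z ^ m / m := by
        rintro ⟨k, n⟩ hp
        rw [Nat.mem_divisorsAntidiagonal] at hp
        have hkm : k * n = m := hp.1
        simp only [ha]
        rw [div_mul_div_comm, ← Nat.cast_mul, hkm]
      rw [Finset.sum_congr rfl hterm, ← Finset.sum_div, ← Finset.sum_mul]
      have : ∑ p ∈ m.divisorsAntidiagonal, (Nat.totient p.1 : ℝ) = m := by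
        rw [← Nat.cast_sum]
        norm_cast
        rw [Nat.sum_divisorsAntidiagonal (fun x _ => Nat.totient x)]
        exact Nat.sum_totient m
      rw [this]
      have hmR : (m : ℝ) ≠ 0 := Nat.cast_ne_zero.mpr hm
      field_simp
  rw [hg] at hfib
  have hfib2 : HasSum (fun m : ℕ => if m = 0 then 0 else z ^ m) (z / (1 - z)) := by
    have h1 : HasSum (fun m : ℕ => z ^ m) (1 - z)⁻¹ :=
      hasSum_geometric_of_lt_one hz0 hz1
    have h2 : HasSum (fun m : ℕ => if m = 0 then (1 : ℝ) else 0) 1 :=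
      hasSum_ite_eq 0 1
    have h3 := h1.sub h2
    have he : (fun m : ℕ => z ^ m - (if m = 0 then (1 : ℝ) else 0))
        = fun m : ℕ => if m = 0 then 0 else z ^ m := by
      funext m
      rcases eq_or_ne m 0 with rfl | hm
      · simp
      · simp [hm]
    rw [he] at h3
    have hv : (1 - z)⁻¹ - 1 = z / (1 - z) := by
      have h1z : (1:ℝ) - z ≠ 0 := by linarith
      field_simp
      ring
    rwa [hv] at h3
  have hSval : S = z / (1 - z) := hfib.unique hfib2
  -- S as iterated sum
  have hiter : S = ∑' k : ℕ, (Nat.totient k : ℝ) / k * (-Real.log (1 - z ^ k)) := by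
    rw [hS, hA.tsum_prod' (fun k => (hinner k).summable)]
    exact tsum_congr fun k => (hinner k).tsum_eq
  -- transfer to ℕ+
  have hFsum : HasSum (fun k : ℕ => (Nat.totient k : ℝ) / k * (-Real.log (1 - z ^ k)))
      (z / (1 - z)) := by
    have hsum2 := ((summable_prod_of_nonneg ha_nonneg).mp hA).2
    have he2 : (fun k : ℕ => ∑' n, a (k, n))
        = fun k : ℕ => (Nat.totient k : ℝ) / k * (-Real.log (1 - z ^ k)) :=
      funext fun k => (hinner k).tsum_eq
    rw [he2] at hsum2
    have h4 := hsum2.hasSum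
    rwa [← hiter, hSval] at h4
  have hcoe : Function.Injective (fun k : ℕ+ => (k : ℕ)) := fun a b h => PNat.coe_injective h
  have hPNat : HasSum (fun k : ℕ+ => (Nat.totient (k : ℕ) : ℝ) / (k : ℕ) *
      (-Real.log (1 - z ^ (k : ℕ)))) (z / (1 - z)) := by
    have := (Function.Injective.hasSum_iff (f := fun k : ℕ =>
        (Nat.totient k : ℝ) / k * (-Real.log (1 - z ^ k))) hcoe ?_).mpr hFsum
    · exact this
    · intro x hx
      have : x = 0 := by
        by_contra h
        exact hx ⟨⟨x, Nat.pos_of_ne_zero h⟩, rfl⟩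
      simp [this]
  have hPNat' : HasSum (fun k : ℕ+ => (Nat.totient (k : ℕ) : ℝ) / (k : ℕ) *
      Real.log (1 - z ^ (k : ℕ))) (z / (z - 1)) := by
    have := hPNat.neg
    have heq : (fun k : ℕ+ => -((Nat.totient (k : ℕ) : ℝ) / (k : ℕ) *
        (-Real.log (1 - z ^ (k : ℕ)))))
        = fun k : ℕ+ => (Nat.totient (k : ℕ) : ℝ) / (k : ℕ) * Real.log (1 - z ^ (k : ℕ)) := by
      funext k; ring
    rw [heq] at this
    have hval : -(z / (1 - z)) = z / (z - 1) := by
      have h1z : (1:ℝ) - z ≠ 0 := by linarith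
      have h2z : z - (1:ℝ) ≠ 0 := by linarith
      field_simp
      ring
    rwa [hval] at this
  refine ⟨?_, hPNat'.tsum_eq⟩
  -- product part
  have hprod := hPNat'.rexp
  have heq : (Real.exp ∘ fun k : ℕ+ => (Nat.totient (k : ℕ) : ℝ) / (k : ℕ) *
      Real.log (1 - z ^ (k : ℕ)))
      = fun k : ℕ+ => (1 - z ^ (k : ℕ)) ^ ((Nat.totient (k : ℕ) : ℝ) / (k : ℕ)) := by
    funext k
    have h1 : (0 : ℝ) < 1 - z ^ (k : ℕ) := hpos _ k.pos.ne'
    simp only [Function.comp_apply]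
    rw [Real.rpow_def_of_pos h1, mul_comm]
  rw [heq] at hprod
  exact hprod.tprod_eq
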